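/- The map Y_λ is monotone: for all symmetric 3×3 matrices T₁, T₂, one has (Y_λ(T₁) - Y_λ(T₂)) : (T₁ - T₂) ≥ 0. -/
import Mathlib


noncomputable section

/-- 3×3 real matrices. -/
abbrev Mat3 := Matrix (Fin 3) (Fin 3) ℝ

/-- Frobenius inner product `A : B = ∑ᵢⱼ Aᵢⱼ Bᵢⱼ` (equals `tr(ABᵀ)`, and `tr(AB)` for symmetric). -/
def finner (A B : Mat3) : ℝ := ∑ i, ∑ j, A i j * B i j

/-- Frobenius norm. -/
def fnorm (A : Mat3) : ℝ := Real.sqrt (finner A A)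

/-- Deviatoric (trace-free) projection `P(T) = T - (tr T / 3)·Id`. -/
def dev (T : Mat3) : Mat3 := T - (Matrix.trace T / 3) • (1 : Mat3)

/-- Yosida-type approximation `Y_λ(T) = ((|P(T)|-k)₊/(2λ))·P(T)/|P(T)|`, and `0` if `P(T) = 0`. -/
def Yos (k lam : ℝ) (T : Mat3) : Mat3 :=
  if dev T = 0 then 0
  else (max (fnorm (dev T) - k) 0 / (2 * lam) * (fnorm (dev T))⁻¹) • dev T

lemma finner_comm (A B : Mat3) : finner A B = finner B A := by
  simp [finner, mul_comm]

lemma finner_sub_left (A B C : Mat3) :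
    finner (A - B) C = finner A C - finner B C := by
  simp [finner, sub_mul, Finset.sum_sub_distrib]

lemma finner_sub_right (A B C : Mat3) :
    finner A (B - C) = finner A B - finner A C := by
  simp [finner, mul_sub, Finset.sum_sub_distrib]

lemma finner_smul_left (c : ℝ) (A B : Mat3) :
    finner (c • A) B = c * finner A B := by
  simp [finner, Finset.mul_sum, mul_assoc]

lemma finner_zero_left (B : Mat3) : finner 0 B = 0 := by simp [finner]

lemma finner_zero_right (A : Mat3) : finner A 0 = 0 := by simp [finner]

lemma finner_nonneg (A : Mat3) : 0 ≤ finner A A :=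
  Finset.sum_nonneg fun _ _ => Finset.sum_nonneg fun _ _ => mul_self_nonneg _

lemma fnorm_nonneg (A : Mat3) : 0 ≤ fnorm A := Real.sqrt_nonneg _

lemma fnorm_sq (A : Mat3) : fnorm A * fnorm A = finner A A :=
  Real.mul_self_sqrt (finner_nonneg A)

lemma fnorm_pos (A : Mat3) (hA : A ≠ 0) : 0 < fnorm A := by
  apply Real.sqrt_pos.mpr
  rcases (finner_nonneg A).lt_or_eq with h | h
  · exact h
  · exfalso
    apply hA
    have h0 : ∑ i, ∑ j, A i j * A i j = 0 := by rw [← finner]; exact h.symm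
    ext i j
    have h1 := (Finset.sum_eq_zero_iff_of_nonneg
      (fun i (_ : i ∈ Finset.univ) =>
        Finset.sum_nonneg fun j _ => mul_self_nonneg (A i j))).mp h0 i (Finset.mem_univ i)
    have h2 := (Finset.sum_eq_zero_iff_of_nonneg
      (fun j (_ : j ∈ Finset.univ) => mul_self_nonneg (A i j))).mp h1 j (Finset.mem_univ j)
    simpa using mul_self_eq_zero.mp h2

/-- Cauchy–Schwarz for `finner`. -/
lemma finner_le_fnorm_mul_fnorm (A B : Mat3) : finner A B ≤ fnorm A * fnorm B := by
  have h := Real.sum_mul_le_sqrt_mul_sqrt (Finset.univ : Finset (Fin 3 × Fin 3))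
    (fun p => A p.1 p.2) (fun p => B p.1 p.2)
  have e1 : finner A B = ∑ p : Fin 3 × Fin 3, A p.1 p.2 * B p.1 p.2 := by
    simp [finner, Fintype.sum_prod_type]
  have e2 : finner A A = ∑ p : Fin 3 × Fin 3, (A p.1 p.2) ^ 2 := by
    simp [finner, Fintype.sum_prod_type, sq]
  have e3 : finner B B = ∑ p : Fin 3 × Fin 3, (B p.1 p.2) ^ 2 := by
    simp [finner, Fintype.sum_prod_type, sq]
  rw [e1, fnorm, fnorm, e2, e3]
  exact h

lemma trace_dev (T : Mat3) : Matrix.trace (dev T) = 0 := by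
  simp only [dev, Matrix.trace_sub, Matrix.trace_smul, Matrix.trace_one]
  simp

lemma finner_one (A : Mat3) : finner A 1 = Matrix.trace A := by
  simp [finner, Matrix.one_apply, Matrix.trace, Matrix.diag]

/-- If `tr Y = 0`, then `finner Y (dev T) = finner Y T`. -/
lemma finner_dev (Y T : Mat3) (hY : Matrix.trace Y = 0) :
    finner Y (dev T) = finner Y T := by
  have hs : finner Y ((Matrix.trace T / 3) • (1 : Mat3))
      = (Matrix.trace T / 3) * finner Y 1 := by
    rw [finner_comm, finner_smul_left, finner_comm]
  rw [dev, finner_sub_right, hs, finner_one, hY]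
  ring

lemma trace_Yos (k lam : ℝ) (T : Mat3) : Matrix.trace (Yos k lam T) = 0 := by
  rw [Yos]
  split_ifs with h
  · simp
  · rw [Matrix.trace_smul, trace_dev]
    simp

/-- `Y_λ` is monotone: `(Y_λ(T₁) - Y_λ(T₂)) : (T₁ - T₂) ≥ 0`. -/
theorem Yos_monotone (k lam : ℝ) (hk : 0 < k) (hlam : 0 < lam) (T₁ T₂ : Mat3) :
    0 ≤ finner (Yos k lam T₁ - Yos k lam T₂) (T₁ - T₂) := by
  set A := dev T₁ with hA
  set B := dev T₂ with hB
  -- reduce to deviatoric parts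
  have hdevsub : dev (T₁ - T₂) = A - B := by
    simp only [hA, hB, dev, Matrix.trace_sub]
    ext i j
    by_cases hij : i = j <;>
      simp [Matrix.sub_apply, Matrix.smul_apply, Matrix.one_apply, hij] <;> ring
  have htr : Matrix.trace (Yos k lam T₁ - Yos k lam T₂) = 0 := by
    rw [Matrix.trace_sub, trace_Yos, trace_Yos]; ring
  have hred : finner (Yos k lam T₁ - Yos k lam T₂) (T₁ - T₂)
      = finner (Yos k lam T₁ - Yos k lam T₂) (A - B) := by
    rw [← hdevsub, finner_dev _ _ htr]
  rw [hred]
  by_cases h1 : A = 0 <;> by_cases h2 : B = 0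
  · rw [Yos, Yos, ← hA, ← hB, if_pos h1, if_pos h2]
    simp [finner_zero_left]
  · -- A = 0, B ≠ 0
    have cB : 0 ≤ max (fnorm B - k) 0 / (2 * lam) * (fnorm B)⁻¹ :=
      mul_nonneg (div_nonneg (le_max_right _ _) (by linarith))
        (inv_nonneg.2 (fnorm_nonneg B))
    rw [Yos, Yos, ← hA, ← hB, if_pos h1, if_neg h2, h1]
    rw [finner_sub_left, finner_zero_left, finner_sub_right, finner_smul_left,
      finner_smul_left, finner_zero_right]
    nlinarith [mul_nonneg cB (finner_nonneg B)]
  · -- A ≠ 0, B = 0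
    have cA : 0 ≤ max (fnorm A - k) 0 / (2 * lam) * (fnorm A)⁻¹ :=
      mul_nonneg (div_nonneg (le_max_right _ _) (by linarith))
        (inv_nonneg.2 (fnorm_nonneg A))
    rw [Yos, Yos, ← hA, ← hB, if_neg h1, if_pos h2, h2, sub_zero, sub_zero,
      finner_smul_left]
    exact mul_nonneg cA (finner_nonneg A)
  · -- main case
    rw [Yos, Yos, ← hA, ← hB, if_neg h1, if_neg h2]
    have ha : 0 < fnorm A := fnorm_pos A h1
    have hb : 0 < fnorm B := fnorm_pos B h2
    set a := fnorm A with ha'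
    set b := fnorm B with hb'
    set fa := max (a - k) 0 with hfa
    set fb := max (b - k) 0 with hfb
    have hfa0 : 0 ≤ fa := le_max_right _ _
    have hfb0 : 0 ≤ fb := le_max_right _ _
    rw [finner_sub_left, finner_sub_right, finner_sub_right,
      finner_smul_left, finner_smul_left, finner_smul_left, finner_smul_left]
    have hAA : finner A A = a * a := (fnorm_sq A).symm
    have hBB : finner B B = b * b := (fnorm_sq B).symm
    have hBA : finner B A = finner A B := finner_comm B A
    have hCS : finner A B ≤ a * b := finner_le_fnorm_mul_fnorm A B
    rw [hAA, hBB, hBA]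
    set g := finner A B with hg
    -- key monotonicity fact
    have hmono : 0 ≤ (fa - fb) * (a - b) := by
      rcases le_total a b with h | h
      · have hle : fa ≤ fb := max_le_max (by linarith) le_rfl
        nlinarith
      · have hle : fb ≤ fa := max_le_max (by linarith) le_rfl
        nlinarith
    set E := fa * a⁻¹ * (a * a - g) + fb * b⁻¹ * (b * b - g) with hE
    have hEnn : 0 ≤ E := by
      have habE : a * b * E = fa * b * (a * a) - fa * b * g
          + fb * a * (b * b) - fb * a * g := by
        rw [hE]
        field_simp
        ring
      have hrhs : 0 ≤ fa * b * (a * a) - fa * b * g + fb * a * (b * b) - fb * a * g := by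
        nlinarith [mul_nonneg (mul_nonneg ha.le hb.le) hmono,
          mul_nonneg (add_nonneg (mul_nonneg hfa0 hb.le) (mul_nonneg hfb0 ha.le))
            (sub_nonneg.2 hCS)]
      have hEeq : E = (a * b * E) / (a * b) := by
        field_simp
      rw [hEeq]
      exact div_nonneg (by linarith) (by positivity)
    have hgoal : fa / (2 * lam) * a⁻¹ * (a * a) - fa / (2 * lam) * a⁻¹ * g -
        (fb / (2 * lam) * b⁻¹ * g - fb / (2 * lam) * b⁻¹ * (b * b))
        = E / (2 * lam) := by
      rw [hE]; field_simp; ring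
    rw [hgoal]
    positivity
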